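/- arXiv:1206.5674 — 6 statements merged into one kernel-verified Lean document; each statement's English description precedes it below -/
import Mathlib

section
/- Let P(t,x,·) be a family of probability measures on a measurable space (E,𝓔) indexed by t ∈ [0,∞) and x ∈ E, satisfying the Chapman–Kolmogorov equation P(t+s,x,Γ) = ∫_E P(s,y,Γ) P(t,x,dy), with joint measurability in (t,x). Fix λ > 0 and a probability measure ν on E. Define the modified transition function 𝑃̃(t,x,Γ) = e^{-λt} P(t,x,Γ) + ∫_E ∫_0^t λ e^{-λs} P(s,y,Γ) ds ν(dy). Then 𝑃̃ also satisfies the Chapman–Kolmogorov equation: 𝑃̃(t+u,x,Γ) = ∫_E 𝑃̃(u,y,Γ) 𝑃̃(t,x,dy) for all t,u ≥ 0. -/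
open Real MeasureTheory

/-- The restart modification of an honest transition function again satisfies the
Chapman–Kolmogorov equation. -/
theorem modified_kernel_chapman_kolmogorov
    {E : Type*} [MeasurableSpace E]
    (P : ℝ → E → Measure E)
    (hprob : ∀ t x, IsProbabilityMeasure (P t x))
    (hmeas : ∀ Γ : Set E, MeasurableSet Γ → Measurable (fun p : ℝ × E => P p.1 p.2 Γ))
    (hCK : ∀ t s : ℝ, 0 ≤ t → 0 ≤ s → ∀ x : E, ∀ Γ : Set E, MeasurableSet Γ →
      P (t + s) x Γ = ∫⁻ y, P s y Γ ∂(P t x))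
    (lam : ℝ) (hlam : 0 < lam)
    (ν : Measure E) [IsProbabilityMeasure ν]
    (Ptilde : ℝ → E → Measure E)
    (hPtilde : ∀ t x, Ptilde t x =
      ENNReal.ofReal (Real.exp (-(lam * t))) • P t x +
        Measure.bind
          ((volume.restrict (Set.Ioc (0 : ℝ) t)).withDensity
            (fun s => ENNReal.ofReal (lam * Real.exp (-(lam * s)))))
          (fun s => Measure.bind ν (fun y => P s y))) :
    ∀ t u : ℝ, 0 ≤ t → 0 ≤ u → ∀ x : E, ∀ Γ : Set E, MeasurableSet Γ →
      Ptilde (t + u) x Γ = ∫⁻ y, Ptilde u y Γ ∂(Ptilde t x) := by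
  classical
  set c : ℝ → ENNReal := fun s => ENNReal.ofReal (lam * Real.exp (-(lam * s))) with hc
  have mc : Measurable c := by
    apply Measurable.ennreal_ofReal
    exact (continuous_const.mul ((continuous_const.mul continuous_id).neg.rexp)).measurable
  -- measurability of sections
  have mPsec : ∀ s : ℝ, Measurable (fun y : E => P s y) := by
    intro s
    exact Measure.measurable_of_measurable_coe _ (fun Γ hΓ =>
      (hmeas Γ hΓ).comp measurable_prodMk_left)
  have mQc : ∀ Γ : Set E, MeasurableSet Γ →
      Measurable (fun s : ℝ => ∫⁻ y, P s y Γ ∂ν) := by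
    intro Γ hΓ
    exact (hmeas Γ hΓ).lintegral_prod_right'
  have mQ : Measurable (fun s : ℝ => ν.bind (fun y => P s y)) := by
    apply Measure.measurable_of_measurable_coe
    intro Γ hΓ
    have h : ∀ s : ℝ, (ν.bind (fun y => P s y)) Γ = ∫⁻ y, P s y Γ ∂ν := fun s =>
      Measure.bind_apply hΓ (mPsec s).aemeasurable
    simp_rw [h]
    exact mQc Γ hΓ
  -- apply formula for Ptilde
  have key : ∀ r : ℝ, ∀ x : E, ∀ Γ : Set E, MeasurableSet Γ →
      Ptilde r x Γ = ENNReal.ofReal (Real.exp (-(lam * r))) * P r x Γ +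
        ∫⁻ s in Set.Ioc (0:ℝ) r, c s * (∫⁻ y, P s y Γ ∂ν) := by
    intro r x Γ hΓ
    rw [hPtilde]
    rw [Measure.coe_add, Pi.add_apply, Measure.smul_apply, smul_eq_mul]
    congr 1
    rw [Measure.bind_apply hΓ mQ.aemeasurable]
    have hgm : Measurable fun s : ℝ => (ν.bind fun y => P s y) Γ :=
      (Measure.measurable_coe hΓ).comp mQ
    rw [lintegral_withDensity_eq_lintegral_mul _ mc hgm]
    refine lintegral_congr fun s => ?_
    simp only [Pi.mul_apply, Function.comp]
    rw [Measure.bind_apply hΓ (mPsec s).aemeasurable]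
  -- the exponential density integrates to 1 - e^{-lam r}
  have hint : ∀ r : ℝ, 0 ≤ r →
      (∫⁻ s in Set.Ioc (0:ℝ) r, c s) = ENNReal.ofReal (1 - Real.exp (-(lam * r))) := by
    intro r hr
    have hcont : Continuous fun s : ℝ => lam * Real.exp (-(lam * s)) :=
      continuous_const.mul ((continuous_const.mul continuous_id).neg.rexp)
    rw [← ofReal_integral_eq_lintegral_ofReal (hcont.integrableOn_Ioc)
      (Filter.Eventually.of_forall fun s => by positivity)]
    congr 1
    rw [← intervalIntegral.integral_of_le hr]
    have : ∀ s : ℝ, lam * Real.exp (-(lam * s)) = lam * Real.exp ((-lam) * s) := by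
      intro s; ring_nf
    simp_rw [this]
    have hlam' : lam ≠ 0 := ne_of_gt hlam
    rw [intervalIntegral.integral_const_mul,
      intervalIntegral.integral_comp_mul_left (fun x => Real.exp x) (by linarith : (-lam) ≠ 0)]
    simp only [mul_zero, integral_exp, smul_eq_mul]
    field_simp
    rw [Real.exp_zero]
    ring
  -- honesty of Ptilde
  have honest : ∀ r : ℝ, ∀ x : E, 0 ≤ r → Ptilde r x Set.univ = 1 := by
    intro r x hr
    rw [key r x Set.univ MeasurableSet.univ]
    have h1 : ∀ s : ℝ, (∫⁻ y, P s y Set.univ ∂ν) = 1 := by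
      intro s
      have : ∀ y : E, P s y Set.univ = 1 := fun y => (hprob s y).measure_univ
      simp [this]
    simp_rw [h1, mul_one]
    have h2 : P r x Set.univ = 1 := (hprob r x).measure_univ
    rw [h2, mul_one, hint r hr, ← ENNReal.ofReal_add (Real.exp_nonneg _)
      (by simp [Real.exp_le_one_iff]; positivity)]
    norm_num
  intro t u ht hu x Γ hΓ
  have mPu : Measurable (fun y : E => P u y Γ) := (hmeas Γ hΓ).comp measurable_prodMk_left
  have hQcΓ : Measurable (fun s : ℝ => ∫⁻ y, P s y Γ ∂ν) := mQc Γ hΓ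
  set Qc : ℝ → ENNReal := fun s => ∫⁻ y, P s y Γ ∂ν with hQcdef
  set C : ENNReal := ∫⁻ s in Set.Ioc (0:ℝ) u, c s * Qc s with hC
  -- expand RHS
  have step1 : (∫⁻ y, Ptilde u y Γ ∂(Ptilde t x))
      = ENNReal.ofReal (Real.exp (-(lam * u))) * (∫⁻ y, P u y Γ ∂(Ptilde t x)) + C := by
    have h : ∀ y : E, Ptilde u y Γ
        = ENNReal.ofReal (Real.exp (-(lam * u))) * P u y Γ + C := fun y => key u y Γ hΓ
    simp_rw [h]
    rw [lintegral_add_left (mPu.const_mul _), lintegral_const_mul _ mPu,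
      lintegral_const, honest t x ht, mul_one]
  -- compute ∫⁻ y, P u y Γ ∂(Ptilde t x)
  have step2 : (∫⁻ y, P u y Γ ∂(Ptilde t x))
      = ENNReal.ofReal (Real.exp (-(lam * t))) * P (t + u) x Γ
        + ∫⁻ s in Set.Ioc (0:ℝ) t, c s * Qc (s + u) := by
    rw [hPtilde t x, lintegral_add_measure, lintegral_smul_measure, ← hCK t u ht hu x Γ hΓ]
    congr 1
    rw [Measure.lintegral_bind mQ.aemeasurable mPu.aemeasurable]
    have hgm2 : Measurable fun s : ℝ => ∫⁻ z, P u z Γ ∂(ν.bind fun y => P s y) :=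
      (Measure.measurable_lintegral mPu).comp mQ
    rw [lintegral_withDensity_eq_lintegral_mul _ mc hgm2]
    refine setLIntegral_congr_fun measurableSet_Ioc (fun s hs => ?_)
    simp only [Pi.mul_apply, Function.comp]
    congr 1
    rw [Measure.lintegral_bind (mPsec s).aemeasurable mPu.aemeasurable]
    refine lintegral_congr fun z => ?_
    exact (hCK s u (le_of_lt hs.1) hu z Γ hΓ).symm
  -- shift the time integral
  have shift : (∫⁻ s in Set.Ioc u (t + u), c s * Qc s)
      = ENNReal.ofReal (Real.exp (-(lam * u))) * ∫⁻ s in Set.Ioc (0:ℝ) t, c s * Qc (s + u) := by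
    have mp : MeasurePreserving (fun s : ℝ => s + u)
        (volume.restrict (Set.Ioc (0:ℝ) t)) (volume.restrict (Set.Ioc u (t + u))) := by
      have h := (measurePreserving_add_right volume u).restrict_preimage
        (measurableSet_Ioc (a := u) (b := t + u))
      rw [Set.preimage_add_const_Ioc] at h
      simpa using h
    rw [← mp.lintegral_comp (f := fun s => c s * Qc s) (mc.mul hQcΓ)]
    have hm2 : Measurable fun s : ℝ => c s * Qc (s + u) :=
      mc.mul (hQcΓ.comp (measurable_add_const u))
    rw [← lintegral_const_mul _ hm2]
    refine lintegral_congr fun s => ?_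
    show c (s + u) * Qc (s + u) = ENNReal.ofReal (Real.exp (-(lam * u))) * (c s * Qc (s + u))
    rw [← mul_assoc, ← ENNReal.ofReal_mul (Real.exp_nonneg _)]
    congr 1
    show ENNReal.ofReal (lam * Real.exp (-(lam * (s + u)))) = _
    congr 1
    rw [show -(lam * (s + u)) = -(lam * u) + -(lam * s) by ring, Real.exp_add]
    ring
  -- split the interval
  have split : (∫⁻ s in Set.Ioc (0:ℝ) (t + u), c s * Qc s)
      = C + ∫⁻ s in Set.Ioc u (t + u), c s * Qc s := by
    rw [hC, ← lintegral_union measurableSet_Ioc (Set.Ioc_disjoint_Ioc_of_le le_rfl),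
      Set.Ioc_union_Ioc_eq_Ioc hu (by linarith)]
  -- assemble
  rw [key (t + u) x Γ hΓ, step1, step2, split, shift]
  have hsplit : ENNReal.ofReal (Real.exp (-(lam * (t + u))))
      = ENNReal.ofReal (Real.exp (-(lam * u))) * ENNReal.ofReal (Real.exp (-(lam * t))) := by
    rw [← ENNReal.ofReal_mul (Real.exp_nonneg _), ← Real.exp_add]
    congr 1
    ring
  rw [hsplit]
  ring
end

section
/- Let P(t,x,Γ) be an honest transition function on a measurable space (E,𝓔) satisfying the Chapman–Kolmogorov equation. Fix λ > 0, w ∈ E, and define q_w(Γ) = ∫_0^∞ λ e^{-λs} P(s,w,Γ) ds and the modified kernel 𝑃̃_w(t,z,Γ) = e^{-λt} P(t,z,Γ) + ∫_0^t λ e^{-λs} P(s,w,Γ) ds. Then q_w is invariant for 𝑃̃_w: for all t ≥ 0 and all Γ ∈ 𝓔, ∫_E 𝑃̃_w(t,z,Γ) q_w(dz) = q_w(Γ). -/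
open Real MeasureTheory ENNReal

/-- For restart from a fixed point `w`, the measure
`q_w(Γ) = ∫_0^∞ λ e^{-λs} P(s,w,Γ) ds` is invariant for the modified kernel
`P̃_w(t,z,Γ) = e^{-λt} P(t,z,Γ) + ∫_0^t λ e^{-λs} P(s,w,Γ) ds`. -/
theorem restart_from_point_invariant_measure
    {E : Type*} [MeasurableSpace E]
    (P : ℝ → E → Measure E)
    (hprob : ∀ t x, IsProbabilityMeasure (P t x))
    (hzero : ∀ x : E, ∀ Γ : Set E, MeasurableSet Γ →
      P 0 x Γ = Set.indicator Γ (fun _ => (1 : ℝ≥0∞)) x)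
    (hmeas : ∀ Γ : Set E, MeasurableSet Γ → Measurable (fun p : ℝ × E => P p.1 p.2 Γ))
    (hCK : ∀ t s : ℝ, 0 ≤ t → 0 ≤ s → ∀ x : E, ∀ Γ : Set E, MeasurableSet Γ →
      P (t + s) x Γ = ∫⁻ y, P s y Γ ∂(P t x))
    (lam : ℝ) (hlam : 0 < lam) (w : E)
    (qw : Measure E)
    (hqw : qw = Measure.bind
      ((volume.restrict (Set.Ioi (0 : ℝ))).withDensity
        (fun s => ENNReal.ofReal (lam * Real.exp (-(lam * s)))))
      (fun s => P s w)) :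
    ∀ t : ℝ, 0 ≤ t → ∀ Γ : Set E, MeasurableSet Γ →
      (∫⁻ z, (ENNReal.ofReal (Real.exp (-(lam * t))) * P t z Γ +
          ∫⁻ s in Set.Ioc (0 : ℝ) t,
            ENNReal.ofReal (lam * Real.exp (-(lam * s))) * P s w Γ) ∂qw)
        = qw Γ := by
  intro t ht Γ hΓ
  set g : ℝ → ℝ≥0∞ := fun s => ENNReal.ofReal (lam * Real.exp (-(lam * s))) with hg
  have hgmeas : Measurable g := by
    apply Measurable.ennreal_ofReal
    exact measurable_const.mul ((measurable_const.mul measurable_id).neg.exp)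
  set μ := (volume.restrict (Set.Ioi (0 : ℝ))).withDensity g with hμdef
  -- measurability facts
  have hPw : Measurable (fun s : ℝ => P s w) :=
    Measure.measurable_of_measurable_coe _ (fun Γ' hΓ' =>
      (hmeas Γ' hΓ').comp (measurable_id.prodMk measurable_const))
  have hPwΓ : ∀ {Γ' : Set E}, MeasurableSet Γ' → Measurable (fun s : ℝ => P s w Γ') :=
    fun hΓ' => (hmeas _ hΓ').comp (measurable_id.prodMk measurable_const)
  have hPtΓ : Measurable (fun z : E => P t z Γ) :=
    (hmeas Γ hΓ).comp (measurable_const.prodMk measurable_id)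
  -- normalization of the exponential density
  have hnorm : ∫⁻ s in Set.Ioi (0 : ℝ), g s = 1 := by
    have h := ProbabilityTheory.lintegral_exponentialPDF_eq_one hlam
    rw [← h, ← lintegral_indicator measurableSet_Ioi]
    apply lintegral_congr_ae
    filter_upwards [compl_mem_ae_iff.2 (volume_singleton (a := (0:ℝ)))] with x hx
    simp only [Set.mem_compl_iff, Set.mem_singleton_iff] at hx
    rw [ProbabilityTheory.exponentialPDF_eq]
    rcases lt_trichotomy 0 x with h0 | h0 | h0
    · simp [hg, Set.indicator_of_mem (Set.mem_Ioi.2 h0), h0.le]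
    · exact absurd h0.symm hx
    · rw [Set.indicator_of_notMem (by simp [Set.mem_Ioi]; linarith),
        if_neg (not_le.2 h0), ofReal_zero]
  -- the formula for qw on measurable sets
  have hqwΓ : ∀ {Γ' : Set E}, MeasurableSet Γ' →
      qw Γ' = ∫⁻ s in Set.Ioi (0 : ℝ), g s * P s w Γ' := by
    intro Γ' hΓ'
    rw [hqw, Measure.bind_apply hΓ' hPw.aemeasurable, hμdef,
      lintegral_withDensity_eq_lintegral_mul _ hgmeas (hPwΓ hΓ')]
    rfl
  have hqw_univ : qw Set.univ = 1 := by
    rw [hqwΓ MeasurableSet.univ]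
    have : ∀ s : ℝ, g s * P s w Set.univ = g s := by
      intro s
      rw [(hprob s w).measure_univ, mul_one]
    simp_rw [this]
    exact hnorm
  -- split the integrand
  rw [lintegral_add_left (hPtΓ.const_mul _), lintegral_const, hqw_univ, mul_one,
    lintegral_const_mul _ hPtΓ]
  -- compute ∫ P t z Γ dqw via bind + withDensity + Chapman–Kolmogorov
  have hinner : Measurable (fun s : ℝ => ∫⁻ z, P t z Γ ∂(P s w)) :=
    (Measure.measurable_lintegral hPtΓ).comp hPw
  have step1 : (∫⁻ z, P t z Γ ∂qw)
      = ∫⁻ s in Set.Ioi (0 : ℝ), g s * P (s + t) w Γ := by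
    rw [hqw, Measure.lintegral_bind hPw.aemeasurable hPtΓ.aemeasurable, hμdef,
      lintegral_withDensity_eq_lintegral_mul _ hgmeas hinner]
    refine setLIntegral_congr_fun_ae measurableSet_Ioi (ae_of_all _ fun s hs => ?_)
    simp only [Pi.mul_apply]
    rw [hCK s t (le_of_lt hs) ht w Γ hΓ]
  rw [step1, ← lintegral_const_mul' _ _ ofReal_ne_top]
  have key : ∀ s : ℝ, ENNReal.ofReal (Real.exp (-(lam * t))) * (g s * P (s + t) w Γ)
      = g (s + t) * P (s + t) w Γ := by
    intro s
    rw [← mul_assoc, hg]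
    congr 1
    rw [← ofReal_mul (Real.exp_nonneg _)]
    congr 1
    rw [mul_add, neg_add, Real.exp_add]
    ring
  simp_rw [key]
  -- translation s ↦ s + t
  set F : ℝ → ℝ≥0∞ := fun u => g u * P u w Γ with hF
  have trans : (∫⁻ s in Set.Ioi (0 : ℝ), F (s + t)) = ∫⁻ u in Set.Ioi t, F u := by
    rw [← lintegral_indicator measurableSet_Ioi, ← lintegral_indicator measurableSet_Ioi]
    have : ∀ s : ℝ, (Set.Ioi (0:ℝ)).indicator (fun s => F (s + t)) s
        = (Set.Ioi t).indicator F (s + t) := by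
      intro s
      by_cases h : 0 < s <;>
        simp [Set.indicator_apply, Set.mem_Ioi, lt_add_iff_pos_left, h]
    simp_rw [this]
    exact lintegral_add_right_eq_self _ t
  rw [trans, hqwΓ hΓ, ← Set.Ioc_union_Ioi_eq_Ioi ht,
    lintegral_union measurableSet_Ioi (Set.Ioc_disjoint_Ioi le_rfl), add_comm]
end

section
/- Let P be an honest transition function satisfying Chapman–Kolmogorov, λ > 0, ν a probability measure on E, 𝑃̃_ν(t,x,Γ) = e^{-λt} P(t,x,Γ) + ∫_E ∫_0^t λ e^{-λs} P(s,y,Γ) ds ν(dy), and q_ν(Γ) = ∫_E ∫_0^∞ λ e^{-λs} P(s,y,Γ) ds ν(dy). Then for every x ∈ E, t ≥ 0, and Γ ∈ 𝓔, |q_ν(Γ) − 𝑃̃_ν(t,x,Γ)| ≤ e^{-λt}. -/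
open Real MeasureTheory

lemma tail_exp_integral (lam : ℝ) (hlam : 0 < lam) (t : ℝ) :
    ∫ s in Set.Ioi t, lam * Real.exp (-(lam * s)) = Real.exp (-(lam * t)) := by
  have hint : IntegrableOn (fun s => lam * Real.exp (-(lam * s))) (Set.Ioi t) := by
    have := (exp_neg_integrableOn_Ioi t hlam).const_mul lam
    simp only [neg_mul] at this
    exact this
  have hderiv : ∀ s ∈ Set.Ici t,
      HasDerivAt (fun u => -Real.exp (-(lam * u))) (lam * Real.exp (-(lam * s))) s := by
    intro s _
    have h1 : HasDerivAt (fun u : ℝ => -(lam * u)) (-lam) s := by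
      have := ((hasDerivAt_id' s).const_mul lam).neg
      rw [mul_one] at this
      exact this
    have h2 := h1.exp
    have : HasDerivAt (fun u => -Real.exp (-(lam * u))) (-(Real.exp (-(lam * s)) * -lam)) s :=
      h2.neg
    convert this using 1
    ring
  have htend : Filter.Tendsto (fun u => -Real.exp (-(lam * u))) Filter.atTop (nhds 0) := by
    have h1 : Filter.Tendsto (fun u : ℝ => lam * u) Filter.atTop Filter.atTop :=
      Filter.tendsto_id.const_mul_atTop hlam
    have h2 : Filter.Tendsto (fun u : ℝ => Real.exp (-(lam * u))) Filter.atTop (nhds 0) :=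
      Real.tendsto_exp_neg_atTop_nhds_zero.comp h1
    simpa using h2.neg
  have := integral_Ioi_of_hasDerivAt_of_tendsto' hderiv hint htend
  rw [this]; ring

/-- Uniform exponential convergence of the restarted transition function to its
invariant measure: `|q_ν(Γ) − P̃_ν(t,x,Γ)| ≤ e^{-λt}` for all `x` and `Γ`. -/
theorem restart_uniform_exponential_bound
    {E : Type*} [MeasurableSpace E]
    (P : ℝ → E → Measure E)
    (hprob : ∀ t x, IsProbabilityMeasure (P t x))
    (hmeas : ∀ Γ : Set E, MeasurableSet Γ → Measurable (fun p : ℝ × E => P p.1 p.2 Γ))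
    (hCK : ∀ t s : ℝ, 0 ≤ t → 0 ≤ s → ∀ x : E, ∀ Γ : Set E, MeasurableSet Γ →
      P (t + s) x Γ = ∫⁻ y, P s y Γ ∂(P t x))
    (lam : ℝ) (hlam : 0 < lam)
    (ν : Measure E) [IsProbabilityMeasure ν] :
    ∀ t : ℝ, 0 ≤ t → ∀ x : E, ∀ Γ : Set E, MeasurableSet Γ →
      |(∫ y, (∫ s in Set.Ioi (0 : ℝ), lam * Real.exp (-(lam * s)) * (P s y Γ).toReal) ∂ν) -
        (Real.exp (-(lam * t)) * (P t x Γ).toReal +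
          ∫ y, (∫ s in Set.Ioc (0 : ℝ) t,
            lam * Real.exp (-(lam * s)) * (P s y Γ).toReal) ∂ν)|
        ≤ Real.exp (-(lam * t)) := by
  intro t ht x Γ hΓ
  set g : ℝ → ℝ := fun s => lam * Real.exp (-(lam * s)) with hgdef
  set f : E → ℝ → ℝ := fun y s => lam * Real.exp (-(lam * s)) * (P s y Γ).toReal with hfdef
  -- basic pointwise facts
  have hPle1 : ∀ s y, (P s y Γ).toReal ≤ 1 := by
    intro s y
    haveI := hprob s y
    have h1 : P s y Γ ≤ 1 := prob_le_one
    calc (P s y Γ).toReal ≤ (1 : ENNReal).toReal := ENNReal.toReal_mono ENNReal.one_ne_top h1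
      _ = 1 := ENNReal.toReal_one
  have hf_nonneg : ∀ y s, 0 ≤ f y s := fun y s =>
    mul_nonneg (mul_nonneg hlam.le (Real.exp_pos _).le) ENNReal.toReal_nonneg
  have hg_nonneg : ∀ s, 0 ≤ g s := fun s => mul_nonneg hlam.le (Real.exp_pos _).le
  have hfg : ∀ y s, f y s ≤ g s := by
    intro y s
    have := hPle1 s y
    calc f y s ≤ lam * Real.exp (-(lam * s)) * 1 := by
          exact mul_le_mul_of_nonneg_left this (mul_nonneg hlam.le (Real.exp_pos _).le)
      _ = g s := by ring
  -- measurability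
  have hfmeas : ∀ y, Measurable (f y) := by
    intro y
    have h1 : Measurable fun s : ℝ => P s y Γ :=
      (hmeas Γ hΓ).comp (measurable_id.prodMk measurable_const)
    exact (measurable_const.mul (Real.measurable_exp.comp (measurable_id.const_mul lam).neg)).mul
      h1.ennreal_toReal
  -- integrability of g on Ioi a
  have hgint : ∀ a : ℝ, IntegrableOn g (Set.Ioi a) := by
    intro a
    have := (exp_neg_integrableOn_Ioi a hlam).const_mul lam
    simp only [neg_mul] at this
    exact this
  have hfint : ∀ y, ∀ a : ℝ, IntegrableOn (f y) (Set.Ioi a) := by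
    intro y a
    refine (hgint a).mono' (hfmeas y).aestronglyMeasurable ?_
    filter_upwards with s
    rw [Real.norm_eq_abs, abs_of_nonneg (hf_nonneg y s)]
    exact hfg y s
  have hfintIoc : ∀ y, IntegrableOn (f y) (Set.Ioc 0 t) :=
    fun y => (hfint y 0).mono_set Set.Ioc_subset_Ioi_self
  -- tail integral of g
  have hgtail : ∀ a : ℝ, ∫ s in Set.Ioi a, g s = Real.exp (-(lam * a)) :=
    fun a => tail_exp_integral lam hlam a
  -- definitions of the three inner integrals
  set q : E → ℝ := fun y => ∫ s in Set.Ioi (0 : ℝ), f y s with hqdef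
  set mid : E → ℝ := fun y => ∫ s in Set.Ioc (0 : ℝ) t, f y s with hmiddef
  set tail : E → ℝ := fun y => ∫ s in Set.Ioi t, f y s with htaildef
  -- splitting
  have hsplit : ∀ y, q y = mid y + tail y := by
    intro y
    have hU : Set.Ioc 0 t ∪ Set.Ioi t = Set.Ioi (0 : ℝ) := Set.Ioc_union_Ioi_eq_Ioi ht
    rw [hqdef]
    simp only [← hU]
    rw [setIntegral_union (Set.Ioc_disjoint_Ioi le_rfl) measurableSet_Ioi
      (hfintIoc y) (hfint y t)]
  -- bounds on inner integrals
  have htail_nonneg : ∀ y, 0 ≤ tail y := fun y =>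
    setIntegral_nonneg measurableSet_Ioi fun s _ => hf_nonneg y s
  have htail_le : ∀ y, tail y ≤ Real.exp (-(lam * t)) := by
    intro y
    calc tail y ≤ ∫ s in Set.Ioi t, g s :=
          integral_mono (hfint y t) (hgint t) fun s => hfg y s
      _ = Real.exp (-(lam * t)) := hgtail t
  have hmid_nonneg : ∀ y, 0 ≤ mid y := fun y =>
    setIntegral_nonneg measurableSet_Ioc fun s _ => hf_nonneg y s
  have hmid_le : ∀ y, mid y ≤ 1 := by
    intro y
    calc mid y ≤ ∫ s in Set.Ioc (0:ℝ) t, g s :=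
          integral_mono (hfintIoc y) ((hgint 0).mono_set Set.Ioc_subset_Ioi_self)
            fun s => hfg y s
      _ ≤ ∫ s in Set.Ioi (0:ℝ), g s := by
          refine setIntegral_mono_set (hgint 0) ?_ ?_
          · filter_upwards with s using hg_nonneg s
          · exact Filter.Eventually.of_forall Set.Ioc_subset_Ioi_self
      _ = Real.exp (-(lam * 0)) := hgtail 0
      _ = 1 := by simp
  have hq_nonneg : ∀ y, 0 ≤ q y := fun y =>
    setIntegral_nonneg measurableSet_Ioi fun s _ => hf_nonneg y s
  have hq_le : ∀ y, q y ≤ 1 := by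
    intro y
    calc q y ≤ ∫ s in Set.Ioi (0:ℝ), g s :=
          integral_mono (hfint y 0) (hgint 0) fun s => hfg y s
      _ = Real.exp (-(lam * 0)) := hgtail 0
      _ = 1 := by simp
  -- measurability in y
  have hFsm : StronglyMeasurable fun p : E × ℝ => f p.1 p.2 := by
    refine Measurable.stronglyMeasurable ?_
    have h1 : Measurable fun p : E × ℝ => (P p.2 p.1 Γ).toReal :=
      ((hmeas Γ hΓ).comp measurable_swap).ennreal_toReal
    exact (measurable_const.mul
      (Real.measurable_exp.comp (measurable_snd.const_mul lam).neg)).mul h1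
  have hq_meas : StronglyMeasurable q :=
    hFsm.integral_prod_right'
      (ν := volume.restrict (Set.Ioi (0:ℝ)))
  have hmid_meas : StronglyMeasurable mid :=
    hFsm.integral_prod_right'
      (ν := volume.restrict (Set.Ioc (0:ℝ) t))
  -- integrability wrt ν
  have hq_int : Integrable q ν := by
    refine (integrable_const (1 : ℝ)).mono' hq_meas.aestronglyMeasurable ?_
    filter_upwards with y
    rw [Real.norm_eq_abs, abs_of_nonneg (hq_nonneg y)]
    exact hq_le y
  have hmid_int : Integrable mid ν := by
    refine (integrable_const (1 : ℝ)).mono' hmid_meas.aestronglyMeasurable ?_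
    filter_upwards with y
    rw [Real.norm_eq_abs, abs_of_nonneg (hmid_nonneg y)]
    exact hmid_le y
  -- main computation
  have hdiff : (∫ y, q y ∂ν) - (∫ y, mid y ∂ν) = ∫ y, tail y ∂ν := by
    rw [← integral_sub hq_int hmid_int]
    congr 1
    ext y
    rw [hsplit y]; ring
  have htailnu_abs : |∫ y, tail y ∂ν| ≤ Real.exp (-(lam * t)) := by
    have := norm_integral_le_of_norm_le_const (μ := ν) (C := Real.exp (-(lam * t)))
      (f := tail) ?_
    · simpa using this
    · filter_upwards with y
      rw [Real.norm_eq_abs, abs_of_nonneg (htail_nonneg y)]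
      exact htail_le y
  have htailnu_nonneg : 0 ≤ ∫ y, tail y ∂ν :=
    integral_nonneg fun y => htail_nonneg y
  have htailnu_le : (∫ y, tail y ∂ν) ≤ Real.exp (-(lam * t)) := by
    have := abs_le.mp htailnu_abs
    exact this.2
  have hP01 : 0 ≤ (P t x Γ).toReal ∧ (P t x Γ).toReal ≤ 1 :=
    ⟨ENNReal.toReal_nonneg, hPle1 t x⟩
  have hexp_pos : 0 < Real.exp (-(lam * t)) := Real.exp_pos _
  have hkey : (∫ y, q y ∂ν) -
      (Real.exp (-(lam * t)) * (P t x Γ).toReal + ∫ y, mid y ∂ν) =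
      (∫ y, tail y ∂ν) - Real.exp (-(lam * t)) * (P t x Γ).toReal := by
    rw [← hdiff]; ring
  rw [hkey]
  rw [abs_le]
  constructor
  · nlinarith [hP01.1, hP01.2, hexp_pos.le]
  · nlinarith [hP01.1, hP01.2, hexp_pos.le]
end

section
/- Let P be an honest transition function with Chapman–Kolmogorov, λ > 0, ν a probability measure, 𝑃̃_ν the restarted kernel and q_ν its invariant measure as above. Then the total variation distance satisfies ‖𝑃̃_ν(t,x,·) − q_ν(·)‖_{TV} ≤ 2 e^{-λt} for all x ∈ E and t ≥ 0; hence the restarted process is exponentially ergodic with index λ and constant function M(x) = 2. -/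
open Real MeasureTheory

section Aux

variable {α : Type*} [MeasurableSpace α]

/-- Total variation of a difference of finite measures is bounded by the sum of masses. -/
lemma tv_sub_le_aux (a b : Measure α) [IsFiniteMeasure a] [IsFiniteMeasure b] :
    (a.toSignedMeasure - b.toSignedMeasure).totalVariation Set.univ
      ≤ a Set.univ + b Set.univ := by
  obtain ⟨i, hi₁, hi₂, hi₃, hpos, hneg⟩ :=
    (a.toSignedMeasure - b.toSignedMeasure).toJordanDecomposition_spec
  rw [SignedMeasure.totalVariation, Measure.add_apply, hpos, hneg,
    SignedMeasure.toMeasureOfZeroLE_apply _ hi₂ hi₁ MeasurableSet.univ,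
    SignedMeasure.toMeasureOfLEZero_apply _ hi₃ hi₁.compl MeasurableSet.univ]
  refine add_le_add ?_ ?_
  · rw [← ENNReal.ofReal_eq_coe_nnreal]
    apply ENNReal.ofReal_le_of_le_toReal
    rw [VectorMeasure.sub_apply, Measure.toSignedMeasure_apply_measurable (hi₁.inter .univ),
      Measure.toSignedMeasure_apply_measurable (hi₁.inter .univ)]
    have h1 : (a (i ∩ Set.univ)).toReal ≤ (a Set.univ).toReal :=
      ENNReal.toReal_mono (measure_ne_top a _) (measure_mono (Set.subset_univ _))
    have h2 : 0 ≤ (b (i ∩ Set.univ)).toReal := ENNReal.toReal_nonneg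
    rw [measureReal_def, measureReal_def]
    linarith
  · rw [← ENNReal.ofReal_eq_coe_nnreal]
    apply ENNReal.ofReal_le_of_le_toReal
    rw [VectorMeasure.sub_apply, Measure.toSignedMeasure_apply_measurable (hi₁.compl.inter .univ),
      Measure.toSignedMeasure_apply_measurable (hi₁.compl.inter .univ)]
    have h1 : (b (iᶜ ∩ Set.univ)).toReal ≤ (b Set.univ).toReal :=
      ENNReal.toReal_mono (measure_ne_top b _) (measure_mono (Set.subset_univ _))
    have h2 : 0 ≤ (a (iᶜ ∩ Set.univ)).toReal := ENNReal.toReal_nonneg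
    rw [measureReal_def, measureReal_def]
    linarith

lemma bind_add_meas {β : Type*} [MeasurableSpace β] (μ ν : Measure α) {κ : α → Measure β}
    (hκ : Measurable κ) : (μ + ν).bind κ = μ.bind κ + ν.bind κ := by
  ext Γ hΓ
  rw [Measure.bind_apply hΓ hκ.aemeasurable, Measure.add_apply, Measure.bind_apply hΓ hκ.aemeasurable,
    Measure.bind_apply hΓ hκ.aemeasurable, lintegral_add_measure]

lemma tv_bound_main (a m τ' Pt q : Measure α)
    [IsFiniteMeasure Pt] [IsFiniteMeasure q] [IsFiniteMeasure a] [IsFiniteMeasure m]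
    [IsFiniteMeasure τ'] (h1 : Pt = a + m) (h2 : q = m + τ') :
    (Pt.toSignedMeasure - q.toSignedMeasure).totalVariation Set.univ
      ≤ a Set.univ + τ' Set.univ := by
  have key : Pt.toSignedMeasure - q.toSignedMeasure
      = a.toSignedMeasure - τ'.toSignedMeasure := by
    ext k hk
    rw [VectorMeasure.sub_apply, VectorMeasure.sub_apply,
      Measure.toSignedMeasure_apply_measurable hk, Measure.toSignedMeasure_apply_measurable hk,
      Measure.toSignedMeasure_apply_measurable hk, Measure.toSignedMeasure_apply_measurable hk,
      h1, h2, measureReal_def, measureReal_def, measureReal_def, measureReal_def,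
      Measure.add_apply, Measure.add_apply,
      ENNReal.toReal_add (measure_ne_top a k) (measure_ne_top m k),
      ENNReal.toReal_add (measure_ne_top m k) (measure_ne_top τ' k)]
    ring
  rw [key]
  exact tv_sub_le_aux a τ'

/-- `∫_t^∞ λ e^{-λ s} ds = e^{-λ t}` in `ℝ≥0∞`. -/
lemma lint_exp_Ioi {lam : ℝ} (hlam : 0 < lam) {t : ℝ} (ht : 0 ≤ t) :
    ∫⁻ s in Set.Ioi t, ENNReal.ofReal (lam * Real.exp (-(lam * s)))
      = ENNReal.ofReal (Real.exp (-(lam * t))) := by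
  have h1 : ∫⁻ s in Set.Ioi t, ENNReal.ofReal (lam * Real.exp (-(lam * s)))
      = ∫⁻ s in Set.Ioi t, ProbabilityTheory.exponentialPDF lam s := by
    refine setLIntegral_congr_fun measurableSet_Ioi (fun s hs => ?_)
    rw [ProbabilityTheory.exponentialPDF_of_nonneg (le_of_lt (lt_of_le_of_lt ht hs))]
  rw [h1]
  have h4 := lintegral_add_compl (ProbabilityTheory.exponentialPDF lam)
    (measurableSet_Iic (a := t)) (μ := volume)
  rw [ProbabilityTheory.lintegral_exponentialPDF_eq_one hlam,
    ProbabilityTheory.lintegral_exponentialPDF_eq_antiDeriv hlam t, if_pos ht,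
    Set.compl_Iic] at h4
  have he : Real.exp (-(lam * t)) ≤ 1 := by
    rw [Real.exp_le_one_iff]
    nlinarith
  have hsum : ENNReal.ofReal (1 - Real.exp (-(lam * t)))
      + ENNReal.ofReal (Real.exp (-(lam * t))) = 1 := by
    rw [← ENNReal.ofReal_add (by linarith) (Real.exp_nonneg _)]
    norm_num
  exact (ENNReal.add_right_inj ENNReal.ofReal_ne_top).mp (h4.trans hsum.symm)

end Aux

/-- Exponential ergodicity of the restarted process in total variation:
`‖P̃_ν(t,x,·) − q_ν(·)‖_{TV} ≤ 2 e^{-λt}`. -/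
theorem restart_exponential_ergodicity_tv
    {E : Type*} [MeasurableSpace E]
    (P : ℝ → E → Measure E)
    (hprob : ∀ t x, IsProbabilityMeasure (P t x))
    (hmeas : ∀ Γ : Set E, MeasurableSet Γ → Measurable (fun p : ℝ × E => P p.1 p.2 Γ))
    (hCK : ∀ t s : ℝ, 0 ≤ t → 0 ≤ s → ∀ x : E, ∀ Γ : Set E, MeasurableSet Γ →
      P (t + s) x Γ = ∫⁻ y, P s y Γ ∂(P t x))
    (lam : ℝ) (hlam : 0 < lam)
    (ν : Measure E) [IsProbabilityMeasure ν]
    (Ptilde : ℝ → E → Measure E)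
    (hPtilde : ∀ t x, Ptilde t x =
      ENNReal.ofReal (Real.exp (-(lam * t))) • P t x +
        Measure.bind
          ((volume.restrict (Set.Ioc (0 : ℝ) t)).withDensity
            (fun s => ENNReal.ofReal (lam * Real.exp (-(lam * s)))))
          (fun s => Measure.bind ν (fun y => P s y)))
    (q : Measure E)
    (hq : q = Measure.bind
      ((volume.restrict (Set.Ioi (0 : ℝ))).withDensity
        (fun s => ENNReal.ofReal (lam * Real.exp (-(lam * s)))))
      (fun s => Measure.bind ν (fun y => P s y)))
    [∀ t x, IsFiniteMeasure (Ptilde t x)] [IsFiniteMeasure q] :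
    ∀ t : ℝ, 0 ≤ t → ∀ x : E,
      ((Ptilde t x).toSignedMeasure - q.toSignedMeasure).totalVariation Set.univ
        ≤ ENNReal.ofReal (2 * Real.exp (-(lam * t))) := by
  intro t ht x
  -- measurability of the kernels
  have hPm : Measurable (fun p : ℝ × E => P p.1 p.2) :=
    Measure.measurable_of_measurable_coe _ (fun Γ hΓ => hmeas Γ hΓ)
  have hPs : ∀ s : ℝ, Measurable (fun y => P s y) :=
    fun s => hPm.comp measurable_prodMk_left
  have hκ : Measurable (fun s : ℝ => Measure.bind ν (fun y => P s y)) := by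
    apply Measure.measurable_of_measurable_coe
    intro Γ hΓ
    have hcongr : (fun s : ℝ => Measure.bind ν (fun y => P s y) Γ)
        = fun s : ℝ => ∫⁻ y, P s y Γ ∂ν := by
      funext s; exact Measure.bind_apply hΓ (hPs s).aemeasurable
    rw [hcongr]
    exact (hmeas Γ hΓ).lintegral_prod_right'
  have hκuniv : ∀ s : ℝ, Measure.bind ν (fun y => P s y) Set.univ = 1 := by
    intro s
    rw [Measure.bind_apply MeasurableSet.univ (hPs s).aemeasurable]
    have : ∀ y, P s y Set.univ = 1 := fun y => (hprob s y).measure_univ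
    rw [lintegral_congr this, lintegral_one, measure_univ]
  -- split `q` at time `t`
  have hres : volume.restrict (Set.Ioi (0 : ℝ))
      = volume.restrict (Set.Ioc (0 : ℝ) t) + volume.restrict (Set.Ioi t) := by
    rw [← Set.Ioc_union_Ioi_eq_Ioi ht,
      Measure.restrict_union ((Set.Iic_disjoint_Ioi le_rfl).mono_left Set.Ioc_subset_Iic_self)
        measurableSet_Ioi]
  have hsplit : q
      = Measure.bind
          ((volume.restrict (Set.Ioc (0 : ℝ) t)).withDensity
            (fun s => ENNReal.ofReal (lam * Real.exp (-(lam * s)))))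
          (fun s => Measure.bind ν (fun y => P s y))
        + Measure.bind
          ((volume.restrict (Set.Ioi t)).withDensity
            (fun s => ENNReal.ofReal (lam * Real.exp (-(lam * s)))))
          (fun s => Measure.bind ν (fun y => P s y)) := by
    rw [hq, hres, withDensity_add_measure, bind_add_meas _ _ hκ]
  -- mass of the tail
  have hτmass : Measure.bind
      ((volume.restrict (Set.Ioi t)).withDensity
        (fun s => ENNReal.ofReal (lam * Real.exp (-(lam * s)))))
      (fun s => Measure.bind ν (fun y => P s y)) Set.univ
      = ENNReal.ofReal (Real.exp (-(lam * t))) := by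
    rw [Measure.bind_apply MeasurableSet.univ hκ.aemeasurable, lintegral_congr hκuniv, lintegral_one,
      withDensity_apply _ MeasurableSet.univ, Measure.restrict_univ]
    exact lint_exp_Ioi hlam ht
  -- finiteness instances
  haveI hfin1 : IsFiniteMeasure (ENNReal.ofReal (Real.exp (-(lam * t))) • P t x) := by
    constructor
    haveI := hprob t x
    rw [Measure.smul_apply, measure_univ, smul_eq_mul, mul_one]
    exact ENNReal.ofReal_lt_top
  haveI hfin2 : IsFiniteMeasure (Measure.bind
      ((volume.restrict (Set.Ioi t)).withDensity
        (fun s => ENNReal.ofReal (lam * Real.exp (-(lam * s)))))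
      (fun s => Measure.bind ν (fun y => P s y))) := by
    constructor
    rw [hτmass]
    exact ENNReal.ofReal_lt_top
  haveI hfin3 : IsFiniteMeasure (Measure.bind
      ((volume.restrict (Set.Ioc (0 : ℝ) t)).withDensity
        (fun s => ENNReal.ofReal (lam * Real.exp (-(lam * s)))))
      (fun s => Measure.bind ν (fun y => P s y))) := by
    refine isFiniteMeasure_of_le q ?_
    rw [hsplit]
    exact Measure.le_add_right le_rfl
  refine le_trans (tv_bound_main _ _ _ _ _ (hPtilde t x) hsplit) ?_
  haveI := hprob t x
  rw [Measure.smul_apply, measure_univ, smul_eq_mul, mul_one, hτmass,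
    ← ENNReal.ofReal_add (Real.exp_nonneg _) (Real.exp_nonneg _), two_mul]
end

section
/- Fix λ > 0, μ, σ > 0, x ∈ ℝ, and a probability measure ν on ℝ with finite second moment. Define h(t) = e^{-λt}((x+μt)² + σ²t) + ∫_ℝ ∫_0^t λ e^{-λs} ((y+μs)² + σ²s) ds ν(dy). Then h(t) → σ²/λ + 2μ²/λ² + ∫_ℝ (2μy/λ + y²) ν(dy) as t → ∞. -/
open Real MeasureTheory Filter

-- Step 1: inner integral closed form
lemma inner_int (lam mu sigma : ℝ) (hlam : 0 < lam) (y t : ℝ) (ht : 0 ≤ t) :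
    (∫ s in Set.Ioc (0 : ℝ) t,
        lam * Real.exp (-(lam * s)) * ((y + mu * s) ^ 2 + sigma ^ 2 * s))
    = (y ^ 2 + 2 * mu * y / lam + sigma ^ 2 / lam + 2 * mu ^ 2 / lam ^ 2)
      - Real.exp (-(lam * t)) * ((y + mu * t) ^ 2 + sigma ^ 2 * t
          + (2 * mu * (y + mu * t) + sigma ^ 2) / lam + 2 * mu ^ 2 / lam ^ 2) := by
  have hlam' : lam ≠ 0 := hlam.ne'
  rw [← intervalIntegral.integral_of_le ht]
  have key : ∀ s ∈ Set.uIcc (0 : ℝ) t, HasDerivAt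
      (fun s => -(Real.exp (-(lam * s)) * ((y + mu * s) ^ 2 + sigma ^ 2 * s
          + (2 * mu * (y + mu * s) + sigma ^ 2) / lam + 2 * mu ^ 2 / lam ^ 2)))
      (lam * Real.exp (-(lam * s)) * ((y + mu * s) ^ 2 + sigma ^ 2 * s)) s := by
    intro s _
    have hE : HasDerivAt (fun s : ℝ => Real.exp (-(lam * s)))
        (Real.exp (-(lam * s)) * (-lam)) s := by
      have h0 : HasDerivAt (fun s : ℝ => -(lam * s)) (-lam) s := by
        simpa using ((hasDerivAt_id s).const_mul lam).fun_neg
      exact (Real.hasDerivAt_exp (-(lam * s))).comp s h0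
    have ha : HasDerivAt (fun s : ℝ => y + mu * s) mu s := by
      simpa using ((hasDerivAt_id s).const_mul mu).const_add y
    have hP : HasDerivAt (fun s : ℝ => (y + mu * s) ^ 2 + sigma ^ 2 * s
          + (2 * mu * (y + mu * s) + sigma ^ 2) / lam + 2 * mu ^ 2 / lam ^ 2)
        (2 * (y + mu * s) * mu + sigma ^ 2 + (2 * mu * mu) / lam) s := by
      have h1 : HasDerivAt (fun s : ℝ => (y + mu * s) ^ 2) (2 * (y + mu * s) * mu) s := by
        simpa [mul_comm] using (ha.fun_pow 2)
      have h2 : HasDerivAt (fun s : ℝ => sigma ^ 2 * s) (sigma ^ 2) s := by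
        simpa using (hasDerivAt_id s).const_mul (sigma ^ 2)
      have h3 : HasDerivAt (fun s : ℝ => (2 * mu * (y + mu * s) + sigma ^ 2) / lam)
          ((2 * mu * mu) / lam) s := by
        have := ((ha.const_mul (2 * mu)).add_const (sigma ^ 2)).div_const lam
        simpa using this
      simpa using (((h1.add h2).add h3).add_const (2 * mu ^ 2 / lam ^ 2))
    have := (hE.fun_mul hP).fun_neg
    refine this.congr_deriv ?_
    field_simp
    ring
  rw [intervalIntegral.integral_eq_sub_of_hasDerivAt key ?_]
  · simp [Real.exp_zero]
    ring
  · apply Continuous.intervalIntegrable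
    continuity

-- Step 2: exp decay kills polynomials
lemma poly_decay (lam : ℝ) (hlam : 0 < lam) (a b c : ℝ) :
    Tendsto (fun t : ℝ => Real.exp (-(lam * t)) * (a + b * t + c * t ^ 2)) atTop (nhds 0) := by
  have hn : ∀ n : ℕ, Tendsto (fun t : ℝ => t ^ n * Real.exp (-(lam * t))) atTop (nhds 0) := by
    intro n
    have h1 : Tendsto (fun u : ℝ => u ^ n * Real.exp (-u)) atTop (nhds 0) :=
      Real.tendsto_pow_mul_exp_neg_atTop_nhds_zero n
    have h2 : Tendsto (fun t : ℝ => lam * t) atTop atTop :=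
      Tendsto.const_mul_atTop hlam tendsto_id
    have h3 := (h1.comp h2).const_mul ((1 / lam) ^ n)
    rw [mul_zero] at h3
    refine h3.congr fun t => ?_
    simp only [Function.comp_apply]
    rw [mul_pow]
    field_simp
    rw [← mul_pow, one_div_mul_cancel hlam.ne', one_pow]
    ring
  have := ((((hn 0).const_mul a).add ((hn 1).const_mul b)).add ((hn 2).const_mul c))
  simp only [mul_zero, add_zero] at this
  refine this.congr fun t => ?_
  ring

/-- Second moment of Brownian motion with drift restarted from `ν` at rate `λ`:
it converges to `σ²/λ + 2μ²/λ² + ∫ (2μy/λ + y²) dν`. -/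
theorem restarted_bm_second_moment
    (lam mu sigma x : ℝ) (hlam : 0 < lam) (hsigma : 0 < sigma)
    (ν : Measure ℝ) [IsProbabilityMeasure ν]
    (hint1 : Integrable (fun y : ℝ => y) ν)
    (hint2 : Integrable (fun y : ℝ => y ^ 2) ν) :
    Filter.Tendsto
      (fun t : ℝ =>
        Real.exp (-(lam * t)) * ((x + mu * t) ^ 2 + sigma ^ 2 * t) +
          ∫ y, (∫ s in Set.Ioc (0 : ℝ) t,
            lam * Real.exp (-(lam * s)) * ((y + mu * s) ^ 2 + sigma ^ 2 * s)) ∂ν)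
      Filter.atTop
      (nhds (sigma ^ 2 / lam + 2 * mu ^ 2 / lam ^ 2 +
        ∫ y, (2 * mu * y / lam + y ^ 2) ∂ν)) := by
  have hlam' : lam ≠ 0 := hlam.ne'
  set m1 := ∫ y, y ∂ν with hm1
  set m2 := ∫ y, y ^ 2 ∂ν with hm2
  -- target constant
  have htarget : (∫ y, (2 * mu * y / lam + y ^ 2) ∂ν) = 2 * mu / lam * m1 + m2 := by
    have : (fun y : ℝ => 2 * mu * y / lam + y ^ 2)
        = fun y : ℝ => (2 * mu / lam) * y + y ^ 2 := by
      funext y; ring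
    rw [this, integral_add (hint1.const_mul _) hint2, integral_const_mul]
  -- integral over ν of inner integral, for t ≥ 0
  have hν : ∀ t : ℝ, 0 ≤ t →
      (∫ y, (∫ s in Set.Ioc (0 : ℝ) t,
          lam * Real.exp (-(lam * s)) * ((y + mu * s) ^ 2 + sigma ^ 2 * s)) ∂ν)
      = (sigma ^ 2 / lam + 2 * mu ^ 2 / lam ^ 2
          - Real.exp (-(lam * t)) * (mu ^ 2 * t ^ 2 + sigma ^ 2 * t
            + (2 * mu ^ 2 * t + sigma ^ 2) / lam + 2 * mu ^ 2 / lam ^ 2))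
        + (2 * mu / lam - Real.exp (-(lam * t)) * (2 * mu * t + 2 * mu / lam)) * m1
        + (1 - Real.exp (-(lam * t))) * m2 := by
    intro t ht
    set c0 : ℝ := sigma ^ 2 / lam + 2 * mu ^ 2 / lam ^ 2
        - Real.exp (-(lam * t)) * (mu ^ 2 * t ^ 2 + sigma ^ 2 * t
          + (2 * mu ^ 2 * t + sigma ^ 2) / lam + 2 * mu ^ 2 / lam ^ 2) with hc0
    set c1 : ℝ := 2 * mu / lam - Real.exp (-(lam * t)) * (2 * mu * t + 2 * mu / lam) with hc1
    set c2 : ℝ := 1 - Real.exp (-(lam * t)) with hc2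
    have hfun : ∀ y : ℝ,
        (∫ s in Set.Ioc (0 : ℝ) t,
            lam * Real.exp (-(lam * s)) * ((y + mu * s) ^ 2 + sigma ^ 2 * s))
        = c0 + c1 * y + c2 * y ^ 2 := by
      intro y
      rw [inner_int lam mu sigma hlam y t ht, hc0, hc1, hc2]
      field_simp
      ring
    rw [integral_congr_ae (Filter.Eventually.of_forall hfun)]
    have hI1 : Integrable (fun y : ℝ => c0 + c1 * y) ν :=
      (integrable_const c0).add (hint1.const_mul c1)
    have hI0 : Integrable (fun _ : ℝ => c0) ν := integrable_const c0
    rw [integral_add hI1 (hint2.const_mul c2), integral_add hI0 (hint1.const_mul c1),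
        integral_const_mul, integral_const_mul, integral_const]
    simp [measure_univ]
    rw [← hm1, ← hm2]
  -- eventual closed form
  have heq : ∀ᶠ t in atTop, (Real.exp (-(lam * t)) * ((x + mu * t) ^ 2 + sigma ^ 2 * t) +
          ∫ y, (∫ s in Set.Ioc (0 : ℝ) t,
            lam * Real.exp (-(lam * s)) * ((y + mu * s) ^ 2 + sigma ^ 2 * s)) ∂ν)
      = (sigma ^ 2 / lam + 2 * mu ^ 2 / lam ^ 2 + (2 * mu / lam * m1 + m2))
        + Real.exp (-(lam * t)) *
          ((x ^ 2 - (sigma ^ 2 / lam + 2 * mu ^ 2 / lam ^ 2 + 2 * mu * m1 / lam + m2))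
            + (2 * x * mu - 2 * mu ^ 2 / lam - 2 * mu * m1) * t + 0 * t ^ 2) := by
    filter_upwards [eventually_ge_atTop (0 : ℝ)] with t ht
    rw [hν t ht]
    field_simp
    ring
  have hlim : Tendsto (fun t : ℝ =>
      (sigma ^ 2 / lam + 2 * mu ^ 2 / lam ^ 2 + (2 * mu / lam * m1 + m2))
        + Real.exp (-(lam * t)) *
          ((x ^ 2 - (sigma ^ 2 / lam + 2 * mu ^ 2 / lam ^ 2 + 2 * mu * m1 / lam + m2))
            + (2 * x * mu - 2 * mu ^ 2 / lam - 2 * mu * m1) * t + 0 * t ^ 2)) atTop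
      (nhds ((sigma ^ 2 / lam + 2 * mu ^ 2 / lam ^ 2 + (2 * mu / lam * m1 + m2)) + 0)) :=
    tendsto_const_nhds.add
      (poly_decay lam hlam (x ^ 2 - (sigma ^ 2 / lam + 2 * mu ^ 2 / lam ^ 2 + 2 * mu * m1 / lam + m2))
        (2 * x * mu - 2 * mu ^ 2 / lam - 2 * mu * m1) 0)
  rw [add_zero] at hlim
  rw [htarget]
  exact Tendsto.congr' (Filter.EventuallyEq.symm heq) hlim
end

section
/- Fix λ > 0, μ, σ > 0, and a probability measure ν on ℝ with finite second moment, with m₁ = ∫ y ν(dy), m₂ = ∫ y² ν(dy). For the Brownian motion with drift restarted from ν at rate λ, the limiting variance equals lim_{t→∞} (E_x[X̃²(t)] − (E_x[X̃(t)])²) = m₂ − m₁² + σ²/λ + μ²/λ², where E_x[X̃(t)] = e^{-λt}(x+μt) + ∫∫_0^t λe^{-λs}(y+μs) ds ν(dy) and E_x[X̃²(t)] = e^{-λt}((x+μt)²+σ²t) + ∫∫_0^t λe^{-λs}((y+μs)²+σ²s) ds ν(dy). -/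
open Real MeasureTheory Filter

lemma restarted_aux1 (lam mu y : ℝ) (hlam : lam ≠ 0) (t : ℝ) (ht : 0 ≤ t) :
    (∫ s in Set.Ioc (0:ℝ) t, lam * Real.exp (-(lam*s)) * (y + mu*s))
      = (y + mu/lam) - Real.exp (-(lam*t)) * (y + mu*t + mu/lam) := by
  rw [← intervalIntegral.integral_of_le ht]
  have h : ∀ s ∈ Set.uIcc (0:ℝ) t,
      HasDerivAt (fun s => -(Real.exp (-(lam*s)) * (y + mu*s + mu/lam)))
        (lam * Real.exp (-(lam*s)) * (y + mu*s)) s := by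
    intro s _
    have h1 : HasDerivAt (fun s : ℝ => Real.exp (-(lam*s))) (Real.exp (-(lam*s)) * (-lam)) s := by
      simpa using (((hasDerivAt_id s).const_mul lam).neg).exp
    have h2 : HasDerivAt (fun s : ℝ => y + mu*s + mu/lam) mu s := by
      simpa using ((((hasDerivAt_id s).const_mul mu).const_add y).add_const (mu/lam))
    have h3 := (h1.fun_mul h2).fun_neg
    refine h3.congr_deriv ?_
    field_simp
    ring
  rw [intervalIntegral.integral_eq_sub_of_hasDerivAt h
    (by apply Continuous.intervalIntegrable; continuity)]
  simp [Real.exp_zero]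
  ring

lemma restarted_aux2 (lam mu sigma y : ℝ) (hlam : lam ≠ 0) (t : ℝ) (ht : 0 ≤ t) :
    (∫ s in Set.Ioc (0:ℝ) t, lam * Real.exp (-(lam*s)) * ((y + mu*s)^2 + sigma^2*s))
      = (y^2 + (2*mu*y + sigma^2)/lam + 2*mu^2/lam^2)
        - Real.exp (-(lam*t)) * ((y + mu*t)^2 + sigma^2*t
            + (2*mu*(y + mu*t) + sigma^2)/lam + 2*mu^2/lam^2) := by
  rw [← intervalIntegral.integral_of_le ht]
  have h : ∀ s ∈ Set.uIcc (0:ℝ) t,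
      HasDerivAt (fun s => -(Real.exp (-(lam*s)) *
          ((y + mu*s)^2 + sigma^2*s + (2*mu*(y + mu*s) + sigma^2)/lam + 2*mu^2/lam^2)))
        (lam * Real.exp (-(lam*s)) * ((y + mu*s)^2 + sigma^2*s)) s := by
    intro s _
    have h1 : HasDerivAt (fun s : ℝ => Real.exp (-(lam*s))) (Real.exp (-(lam*s)) * (-lam)) s := by
      simpa using (((hasDerivAt_id s).const_mul lam).neg).exp
    have hlin : HasDerivAt (fun s : ℝ => y + mu*s) mu s := by
      simpa using (((hasDerivAt_id s).const_mul mu).const_add y)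
    have hsq : HasDerivAt (fun s : ℝ => (y + mu*s)^2) (2*(y + mu*s)*mu) s := by
      have := hlin.fun_pow 2
      simpa using this
    have h2 : HasDerivAt (fun s : ℝ => (y + mu*s)^2 + sigma^2*s
        + (2*mu*(y + mu*s) + sigma^2)/lam + 2*mu^2/lam^2)
        (2*(y + mu*s)*mu + sigma^2 + 2*mu*mu/lam) s := by
      have hb : HasDerivAt (fun s : ℝ => sigma^2*s) (sigma^2) s := by
        simpa using (hasDerivAt_id s).const_mul (sigma^2)
      have hc : HasDerivAt (fun s : ℝ => (2*mu*(y + mu*s) + sigma^2)/lam) (2*mu*mu/lam) s := by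
        have := ((hlin.const_mul (2*mu)).add_const (sigma^2)).div_const lam
        simpa using this
      exact (((hsq.add hb).add hc).add_const (2*mu^2/lam^2))
    have h3 := (h1.fun_mul h2).fun_neg
    refine h3.congr_deriv ?_
    field_simp
    ring
  rw [intervalIntegral.integral_eq_sub_of_hasDerivAt h
    (by apply Continuous.intervalIntegrable; continuity)]
  simp [Real.exp_zero]
  ring

/-- Limiting variance of Brownian motion with drift restarted from `ν` at rate `λ`:
`m₂ − m₁² + σ²/λ + μ²/λ²`. -/
theorem restarted_bm_limiting_variance
    (lam mu sigma x : ℝ) (hlam : 0 < lam) (hsigma : 0 < sigma)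
    (ν : Measure ℝ) [IsProbabilityMeasure ν]
    (hint1 : Integrable (fun y : ℝ => y) ν)
    (hint2 : Integrable (fun y : ℝ => y ^ 2) ν) :
    Filter.Tendsto
      (fun t : ℝ =>
        (Real.exp (-(lam * t)) * ((x + mu * t) ^ 2 + sigma ^ 2 * t) +
          ∫ y, (∫ s in Set.Ioc (0 : ℝ) t,
            lam * Real.exp (-(lam * s)) * ((y + mu * s) ^ 2 + sigma ^ 2 * s)) ∂ν) -
        (Real.exp (-(lam * t)) * (x + mu * t) +
          ∫ y, (∫ s in Set.Ioc (0 : ℝ) t,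
            lam * Real.exp (-(lam * s)) * (y + mu * s)) ∂ν) ^ 2)
      Filter.atTop
      (nhds ((∫ y, y ^ 2 ∂ν) - (∫ y, y ∂ν) ^ 2 +
        sigma ^ 2 / lam + mu ^ 2 / lam ^ 2)) := by
  have hl : lam ≠ 0 := hlam.ne'
  set m₁ : ℝ := ∫ y, y ∂ν with hm1
  set m₂ : ℝ := ∫ y, y ^ 2 ∂ν with hm2
  have hmul : Tendsto (fun t : ℝ => lam * t) atTop atTop :=
    Tendsto.const_mul_atTop hlam tendsto_id
  have hu : Tendsto (fun t : ℝ => Real.exp (-(lam * t))) atTop (nhds 0) :=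
    Real.tendsto_exp_atBot.comp (tendsto_neg_atTop_atBot.comp hmul)
  have hv : Tendsto (fun t : ℝ => t * Real.exp (-(lam * t))) atTop (nhds 0) := by
    have h := (Real.tendsto_pow_mul_exp_neg_atTop_nhds_zero 1).comp hmul
    have h' := h.const_mul (1/lam)
    simp only [Function.comp] at h'
    refine Tendsto.congr (fun t => ?_) (by simpa using h')
    field_simp
  have hg : Tendsto (fun t : ℝ =>
      (m₂ + (2*mu*m₁ + sigma^2)/lam + 2*mu^2/lam^2)
      + (x^2 - m₂ - (2*mu*m₁ + sigma^2)/lam - 2*mu^2/lam^2) * Real.exp (-(lam*t))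
      + (2*x*mu - 2*mu*m₁ - 2*mu^2/lam) * (t * Real.exp (-(lam*t)))
      - ((m₁ + mu/lam) + (x - m₁ - mu/lam) * Real.exp (-(lam*t)))^2) atTop
      (nhds (m₂ - m₁^2 + sigma^2/lam + mu^2/lam^2)) := by
    have base : Tendsto (fun t : ℝ =>
        (m₂ + (2*mu*m₁ + sigma^2)/lam + 2*mu^2/lam^2)
        + (x^2 - m₂ - (2*mu*m₁ + sigma^2)/lam - 2*mu^2/lam^2) * Real.exp (-(lam*t))
        + (2*x*mu - 2*mu*m₁ - 2*mu^2/lam) * (t * Real.exp (-(lam*t)))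
        - ((m₁ + mu/lam) + (x - m₁ - mu/lam) * Real.exp (-(lam*t)))^2) atTop
        (nhds ((m₂ + (2*mu*m₁ + sigma^2)/lam + 2*mu^2/lam^2)
        + (x^2 - m₂ - (2*mu*m₁ + sigma^2)/lam - 2*mu^2/lam^2) * 0
        + (2*x*mu - 2*mu*m₁ - 2*mu^2/lam) * 0
        - ((m₁ + mu/lam) + (x - m₁ - mu/lam) * 0)^2)) :=
      ((tendsto_const_nhds.add (hu.const_mul _)).add (hv.const_mul _)).sub
        ((tendsto_const_nhds.add (hu.const_mul _)).pow 2)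
    convert base using 2
    field_simp
    ring
  refine Tendsto.congr' ?_ hg
  filter_upwards [eventually_ge_atTop (0:ℝ)] with t ht
  have e1 : (∫ y, (∫ s in Set.Ioc (0:ℝ) t, lam * Real.exp (-(lam*s)) * (y + mu*s)) ∂ν)
      = m₁ * (1 - Real.exp (-(lam*t)))
        + (mu/lam - Real.exp (-(lam*t)) * (mu*t + mu/lam)) := by
    have hptw : ∀ y : ℝ, (∫ s in Set.Ioc (0:ℝ) t, lam * Real.exp (-(lam*s)) * (y + mu*s))
        = y * (1 - Real.exp (-(lam*t))) + (mu/lam - Real.exp (-(lam*t)) * (mu*t + mu/lam)) := by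
      intro y
      rw [restarted_aux1 lam mu y hl t ht]
      ring
    simp_rw [hptw]
    rw [integral_add (hint1.mul_const _) (integrable_const _), integral_mul_const,
      integral_const]
    simp [hm1]
  have e2 : (∫ y, (∫ s in Set.Ioc (0:ℝ) t,
        lam * Real.exp (-(lam*s)) * ((y + mu*s)^2 + sigma^2*s)) ∂ν)
      = m₂ * (1 - Real.exp (-(lam*t)))
        + m₁ * (2*mu/lam - Real.exp (-(lam*t)) * (2*mu*t + 2*mu/lam))
        + (sigma^2/lam + 2*mu^2/lam^2
            - Real.exp (-(lam*t)) * (mu^2*t^2 + sigma^2*t + (2*mu^2*t + sigma^2)/lam + 2*mu^2/lam^2)) := by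
    have hptw : ∀ y : ℝ, (∫ s in Set.Ioc (0:ℝ) t,
          lam * Real.exp (-(lam*s)) * ((y + mu*s)^2 + sigma^2*s))
        = y^2 * (1 - Real.exp (-(lam*t)))
          + (y * (2*mu/lam - Real.exp (-(lam*t)) * (2*mu*t + 2*mu/lam))
          + (sigma^2/lam + 2*mu^2/lam^2
            - Real.exp (-(lam*t)) * (mu^2*t^2 + sigma^2*t + (2*mu^2*t + sigma^2)/lam + 2*mu^2/lam^2))) := by
      intro y
      rw [restarted_aux2 lam mu sigma y hl t ht]
      field_simp
      ring
    simp_rw [hptw]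
    have hadd1 : Integrable (fun y : ℝ =>
        y * (2*mu/lam - Real.exp (-(lam*t)) * (2*mu*t + 2*mu/lam))
        + (sigma^2/lam + 2*mu^2/lam^2
          - Real.exp (-(lam*t)) * (mu^2*t^2 + sigma^2*t + (2*mu^2*t + sigma^2)/lam
            + 2*mu^2/lam^2))) ν := by
      exact (hint1.mul_const _).add (integrable_const _)
    rw [integral_add (hint2.mul_const _) hadd1,
      integral_add (hint1.mul_const _) (integrable_const _),
      integral_mul_const, integral_mul_const, integral_const]
    simp [hm1, hm2]
    ring
  rw [e1, e2]
  field_simp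
  ring
end
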